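/- (Theorem 2(b), maximality at center; halfspace-probability form.) Let H be a separable real Hilbert space with orthonormal basis (φ_k)_{k≥1}, γ_k > 0 with γ_1 ≥ γ_k for all k, S : H → H bounded self-adjoint with S φ_k = γ_k^{1/2} φ_k for all k, and λ > γ_1^{-1/2}. Let (Ω, P) be a probability space and X : Ω → H a Borel-measurable random element that is halfspace symmetric about θ ∈ H. Then inf_{v ∈ V_λ(S)} P(⟨X − θ, v⟩ ≥ 0) ≥ 1/2, and for every x ∈ H, inf_{v ∈ V_λ(S)} P(⟨X − x, v⟩ ≥ 0) ≤ inf_{v ∈ V_λ(S)} P(⟨X − θ, v⟩ ≥ 0); that is, the regularized halfspace depth is maximized at the center θ. -/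

import Mathlib

open MeasureTheory
open scoped RealInnerProductSpace ENNReal

/-- The regularized direction set `V_λ(S)`:
unit vectors `v` with a preimage `u` under `S` of norm at most `λ`. -/
def regDirSet {H : Type*} [NormedAddCommGroup H] [InnerProductSpace ℝ H]
    (S : H →L[ℝ] H) (l : ℝ) : Set H :=
  {v | ‖v‖ = 1 ∧ ∃ u : H, S u = v ∧ ‖u‖ ≤ l}

section aux
variable {H : Type*} [NormedAddCommGroup H] [InnerProductSpace ℝ H]

lemma aux_norm_sq_comb (φ : HilbertBasis ℕ ℝ H) {j k : ℕ} (hjk : j ≠ k) (a b : ℝ) :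
    ‖a • φ j + b • φ k‖ ^ 2 = a ^ 2 + b ^ 2 := by
  have h0 : ⟪(a • φ j : H), b • φ k⟫ = 0 := by
    rw [real_inner_smul_left, real_inner_smul_right, φ.orthonormal.2 hjk]
    ring
  have hnj : ‖(φ j : H)‖ = 1 := φ.orthonormal.1 j
  have hnk : ‖(φ k : H)‖ = 1 := φ.orthonormal.1 k
  rw [norm_add_sq_real, h0, norm_smul, norm_smul, hnj, hnk]
  simp [Real.norm_eq_abs, mul_pow, sq_abs]

/-- Existence of a good direction in the regularized direction set. -/
lemma aux_exists_dir [CompleteSpace H] (φ : HilbertBasis ℕ ℝ H)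
    (γ : ℕ → ℝ) (hγpos : ∀ k, 0 < γ k) (hγmax : ∀ k, γ k ≤ γ 0)
    (S : H →L[ℝ] H) (hSφ : ∀ k, S (φ k) = Real.sqrt (γ k) • φ k)
    (l : ℝ) (hl : (Real.sqrt (γ 0))⁻¹ < l)
    (d : H) (hd : d ≠ 0) :
    ∃ v ∈ regDirSet S l, 0 < ⟪d, v⟫ := by
  have hγ0 : 0 < γ 0 := hγpos 0
  have hs0 : 0 < Real.sqrt (γ 0) := Real.sqrt_pos.mpr hγ0
  have hlpos : 0 < l := lt_trans (inv_pos.mpr hs0) hl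
  have hex : ∃ k, ⟪d, φ k⟫ ≠ 0 := by
    by_contra h
    push_neg at h
    apply hd
    have hz : φ.repr d = 0 := by
      ext k
      simpa [φ.repr_apply_apply, real_inner_comm] using h k
    exact φ.repr.injective (by rw [hz, map_zero])
  rcases hex with ⟨k, hk⟩
  by_cases h0 : ⟪d, φ 0⟫ = 0
  · -- case B
    have hk0 : k ≠ 0 := by rintro rfl; exact hk h0
    have hγk : 0 < γ k := hγpos k
    have hsk : 0 < Real.sqrt (γ k) := Real.sqrt_pos.mpr hγk
    have hsq0 : Real.sqrt (γ 0) ^ 2 = γ 0 := Real.sq_sqrt hγ0.le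
    have hsqk : Real.sqrt (γ k) ^ 2 = γ k := Real.sq_sqrt hγk.le
    have hε : 0 < l ^ 2 - (γ 0)⁻¹ := by
      have : (Real.sqrt (γ 0))⁻¹ ^ 2 < l ^ 2 := by
        apply pow_lt_pow_left₀ hl (by positivity)
        norm_num
      rw [← hsq0]
      rw [inv_pow] at this
      linarith
    set ε := l ^ 2 - (γ 0)⁻¹ with hεdef
    set t := min (1/2 : ℝ) (ε * γ k) with htdef
    have ht : 0 < t := lt_min (by norm_num) (by positivity)
    have ht1 : t ≤ 1/2 := min_le_left _ _
    have htε : t ≤ ε * γ k := min_le_right _ _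
    set a := Real.sqrt (1 - t) with hadef
    set b := (if 0 < ⟪d, φ k⟫ then 1 else -1) * Real.sqrt t with hbdef
    have ha2 : a ^ 2 = 1 - t := Real.sq_sqrt (by linarith)
    have hb2 : b ^ 2 = t := by
      rw [hbdef, mul_pow, Real.sq_sqrt ht.le]
      split <;> norm_num
    refine ⟨a • φ 0 + b • φ k, ⟨?_, ?_⟩, ?_⟩
    · have hns : ‖a • φ 0 + b • φ k‖ ^ 2 = 1 := by
        rw [aux_norm_sq_comb φ (Ne.symm hk0) a b, ha2, hb2]; ring
      calc ‖a • φ 0 + b • φ k‖ = Real.sqrt (‖a • φ 0 + b • φ k‖ ^ 2) :=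
            (Real.sqrt_sq (norm_nonneg _)).symm
        _ = 1 := by rw [hns, Real.sqrt_one]
    · refine ⟨(a * (Real.sqrt (γ 0))⁻¹) • φ 0 + (b * (Real.sqrt (γ k))⁻¹) • φ k, ?_, ?_⟩
      · rw [map_add, ContinuousLinearMap.map_smul, ContinuousLinearMap.map_smul,
          hSφ 0, hSφ k, smul_smul, smul_smul]
        congr 2
        · field_simp
        · field_simp
      · have hnu := aux_norm_sq_comb φ (Ne.symm hk0)
          (a * (Real.sqrt (γ 0))⁻¹) (b * (Real.sqrt (γ k))⁻¹)
        have h1 : (a * (Real.sqrt (γ 0))⁻¹) ^ 2 = (1 - t) * (γ 0)⁻¹ := by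
          rw [mul_pow, ha2, inv_pow, hsq0]
        have h2 : (b * (Real.sqrt (γ k))⁻¹) ^ 2 = t * (γ k)⁻¹ := by
          rw [mul_pow, hb2, inv_pow, hsqk]
        have hle : ‖(a * (Real.sqrt (γ 0))⁻¹) • φ 0 + (b * (Real.sqrt (γ k))⁻¹) • φ k‖ ^ 2
            ≤ l ^ 2 := by
          rw [hnu, h1, h2]
          have e1 : (1 - t) * (γ 0)⁻¹ ≤ (γ 0)⁻¹ := by
            have : 0 ≤ t * (γ 0)⁻¹ := by positivity
            nlinarith
          have e2 : t * (γ k)⁻¹ ≤ ε := by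
            have := mul_le_mul_of_nonneg_right htε (inv_pos.mpr hγk).le
            rwa [mul_assoc, mul_inv_cancel₀ hγk.ne', mul_one] at this
          linarith
        calc ‖(a * (Real.sqrt (γ 0))⁻¹) • φ 0 + (b * (Real.sqrt (γ k))⁻¹) • φ k‖
            = Real.sqrt (‖(a * (Real.sqrt (γ 0))⁻¹) • φ 0 +
                (b * (Real.sqrt (γ k))⁻¹) • φ k‖ ^ 2) :=
              (Real.sqrt_sq (norm_nonneg _)).symm
          _ ≤ Real.sqrt (l ^ 2) := Real.sqrt_le_sqrt hle
          _ = l := Real.sqrt_sq hlpos.le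
    · rw [inner_add_right, real_inner_smul_right, real_inner_smul_right, h0]
      have : 0 < b * ⟪d, φ k⟫ := by
        rw [hbdef]
        rcases lt_or_gt_of_ne hk with hneg | hpos
        · rw [if_neg (not_lt.mpr hneg.le)]
          nlinarith [Real.sqrt_pos.mpr ht]
        · rw [if_pos hpos]
          nlinarith [Real.sqrt_pos.mpr ht]
      linarith
  · -- case A : use ± φ 0
    set s := (if 0 < ⟪d, φ 0⟫ then (1:ℝ) else -1) with hsdef
    have hs1 : s = 1 ∨ s = -1 := by rw [hsdef]; split <;> simp
    have hsabs : |s| = 1 := by rcases hs1 with h | h <;> simp [h]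
    refine ⟨s • φ 0, ⟨?_, ?_⟩, ?_⟩
    · rw [norm_smul, Real.norm_eq_abs, hsabs, φ.orthonormal.1 0, mul_one]
    · refine ⟨(s * (Real.sqrt (γ 0))⁻¹) • φ 0, ?_, ?_⟩
      · rw [ContinuousLinearMap.map_smul, hSφ 0, smul_smul]
        congr 1
        field_simp
      · rw [norm_smul, Real.norm_eq_abs, abs_mul, hsabs, one_mul,
          φ.orthonormal.1 0, mul_one, abs_of_pos (inv_pos.mpr hs0)]
        exact hl.le
    · rw [real_inner_smul_right, hsdef]
      rcases lt_or_gt_of_ne h0 with hneg | hpos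
      · rw [if_neg (not_lt.mpr hneg.le)]; nlinarith
      · rw [if_pos hpos]; nlinarith

end aux

/-- Theorem 2(b), maximality at center: if `X` is halfspace
symmetric about `θ` and `λ > γ_1^{-1/2}`, then the regularized halfspace depth
of `θ` is at least `1/2` and the depth of any point `x` is at most that of `θ`. -/
theorem crhd_maximality_at_center {H : Type*} [NormedAddCommGroup H]
    [InnerProductSpace ℝ H] [CompleteSpace H] [MeasurableSpace H] [BorelSpace H]
    {Ω : Type*} [MeasurableSpace Ω] (P : Measure Ω) [IsProbabilityMeasure P]
    (X : Ω → H) (hX : Measurable X)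
    (φ : HilbertBasis ℕ ℝ H)
    (γ : ℕ → ℝ) (hγpos : ∀ k, 0 < γ k) (hγmax : ∀ k, γ k ≤ γ 0)
    (S : H →L[ℝ] H) (hS : ∀ x y : H, ⟪S x, y⟫ = ⟪x, S y⟫)
    (hSφ : ∀ k, S (φ k) = Real.sqrt (γ k) • φ k)
    (l : ℝ) (hl : (Real.sqrt (γ 0))⁻¹ < l)
    (θ : H)
    (hsymm : ∀ v : H, ‖v‖ = 1 → (1 / 2 : ℝ≥0∞) ≤ P {ω | 0 ≤ ⟪X ω - θ, v⟫}) :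
    (1 / 2 : ℝ≥0∞) ≤ (⨅ v ∈ regDirSet S l, P {ω | 0 ≤ ⟪X ω - θ, v⟫}) ∧
    ∀ x : H, (⨅ v ∈ regDirSet S l, P {ω | 0 ≤ ⟪X ω - x, v⟫})
      ≤ ⨅ v ∈ regDirSet S l, P {ω | 0 ≤ ⟪X ω - θ, v⟫} := by
  have part1 : (1 / 2 : ℝ≥0∞) ≤ ⨅ v ∈ regDirSet S l, P {ω | 0 ≤ ⟪X ω - θ, v⟫} :=
    le_iInf₂ fun v hv => hsymm v hv.1
  refine ⟨part1, fun x => ?_⟩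
  rcases eq_or_ne x θ with rfl | hx
  · exact le_rfl
  obtain ⟨v, hv, hpos⟩ := aux_exists_dir φ γ hγpos hγmax S hSφ l hl (x - θ)
    (sub_ne_zero.mpr hx)
  have hmeas : ∀ c : H, MeasurableSet {ω | 0 ≤ ⟪X ω - c, -v⟫} := by
    intro c
    have hc : Continuous fun y : H => ⟪y - c, -v⟫ :=
      (continuous_id.sub continuous_const).inner continuous_const
    exact measurableSet_le measurable_const (hc.measurable.comp hX)
  set A := {ω | 0 ≤ ⟪X ω - x, v⟫} with hA
  set B := {ω | 0 ≤ ⟪X ω - θ, -v⟫} with hB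
  have hdisj : Disjoint A B := by
    rw [Set.disjoint_left]
    intro ω hωA hωB
    have h1 : (0:ℝ) ≤ ⟪X ω - x, v⟫ := hωA
    have h2 : (0:ℝ) ≤ ⟪X ω - θ, -v⟫ := hωB
    rw [inner_neg_right] at h2
    have key : ⟪X ω - θ, v⟫ = ⟪X ω - x, v⟫ + ⟪x - θ, v⟫ := by
      rw [← inner_add_left]
      congr 1
      abel
    linarith
  have hsum : P A + P B ≤ 1 := by
    rw [← measure_union hdisj (hmeas θ)]
    exact prob_le_one
  have hBhalf : (1/2 : ℝ≥0∞) ≤ P B := hsymm (-v) (by simpa using hv.1)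
  have hPA : P A ≤ 1/2 := by
    have h1 : P A + 1/2 ≤ 1/2 + 1/2 := by
      rw [ENNReal.add_halves]
      exact le_trans (add_le_add le_rfl hBhalf) hsum
    exact (ENNReal.add_le_add_iff_right (by norm_num)).mp h1
  calc (⨅ w ∈ regDirSet S l, P {ω | 0 ≤ ⟪X ω - x, w⟫}) ≤ P A := iInf₂_le v hv
    _ ≤ 1/2 := hPA
    _ ≤ _ := part1
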